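/- For bounded linear operators A on H and B on K, w(A ⊗ B)² ≤ (1/2)‖ A*A ⊗ B*B + AA* ⊗ BB* ‖ ≤ ‖A‖²‖B‖². -/

import Mathlib

open ContinuousLinearMap

/-- Numerical radius: `w(T) = sup { |⟨Tx,x⟩| : ‖x‖ = 1 }`. -/
noncomputable def nrad {E : Type*} [NormedAddCommGroup E] [InnerProductSpace ℂ E]
    (T : E →L[ℂ] E) : ℝ :=
  ⨆ x : {x : E // ‖x‖ = 1}, ‖(inner ℂ (T x.1) x.1 : ℂ)‖

/-- `tmul` realizes `E` as the Hilbert tensor product of `H` and `K`: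
the inner ℂ product is multiplicative on elementary tensors and elementary
tensors span a dense subspace. -/
structure IsHilbertTensorMap
    {H K E : Type*} [NormedAddCommGroup H] [InnerProductSpace ℂ H]
    [NormedAddCommGroup K] [InnerProductSpace ℂ K]
    [NormedAddCommGroup E] [InnerProductSpace ℂ E]
    (tmul : H →ₗ[ℂ] K →ₗ[ℂ] E) : Prop where
  inner_tmul : ∀ (x z : H) (y w : K),
    (inner ℂ (tmul x y) (tmul z w) : ℂ) = (inner ℂ x z : ℂ) * (inner ℂ y w : ℂ)
  dense_span :
    Dense ((Submodule.span ℂ (Set.range fun p : H × K => tmul p.1 p.2) : Submodule ℂ E) : Set E)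

/-- `T` is the tensor product operator `A ⊗ B`, i.e. `T (x ⊗ y) = A x ⊗ B y`. -/
def IsTensorOp {H K E : Type*} [NormedAddCommGroup H] [InnerProductSpace ℂ H]
    [NormedAddCommGroup K] [InnerProductSpace ℂ K]
    [NormedAddCommGroup E] [InnerProductSpace ℂ E]
    (tmul : H →ₗ[ℂ] K →ₗ[ℂ] E)
    (A : H →L[ℂ] H) (B : K →L[ℂ] K) (T : E →L[ℂ] E) : Prop :=
  ∀ (x : H) (y : K), T (tmul x y) = tmul (A x) (B y)

-- helper section
section Helpers

lemma adjoint_norm_eq {F : Type*} [NormedAddCommGroup F] [InnerProductSpace ℂ F]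
    [CompleteSpace F] (C : F →L[ℂ] F) : ‖adjoint C‖ = ‖C‖ := by
  rw [← star_eq_adjoint]; exact norm_star C

lemma inner_apply_left' {F : Type*} [NormedAddCommGroup F] [InnerProductSpace ℂ F]
    [CompleteSpace F] (C : F →L[ℂ] F) (y x : F) :
    (inner ℂ (C y) x : ℂ) = inner ℂ y (adjoint C x) := by
  conv_lhs => rw [← adjoint_adjoint C]
  exact adjoint_inner_left (adjoint C) x y

lemma nrad_sq_le_half {E : Type*} [NormedAddCommGroup E] [InnerProductSpace ℂ E]
    [CompleteSpace E] (T : E →L[ℂ] E) :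
    nrad T ^ 2 ≤ (1 / 2) * ‖adjoint T * T + T * adjoint T‖ := by
  set c : ℝ := (1 / 2) * ‖adjoint T * T + T * adjoint T‖ with hc
  have hc0 : 0 ≤ c := by positivity
  have key : ∀ x : E, ‖x‖ = 1 → ‖(inner ℂ (T x) x : ℂ)‖ ^ 2 ≤ c := by
    intro x hx
    have h1 : ‖(inner ℂ (T x) x : ℂ)‖ ≤ ‖T x‖ := by
      calc ‖(inner ℂ (T x) x : ℂ)‖ ≤ ‖T x‖ * ‖x‖ := norm_inner_le_norm _ _
        _ = ‖T x‖ := by rw [hx, mul_one]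
    have h2 : ‖(inner ℂ (T x) x : ℂ)‖ ≤ ‖adjoint T x‖ := by
      have e : (inner ℂ (T x) x : ℂ) = inner ℂ x (adjoint T x) :=
        (adjoint_inner_right T x x).symm
      rw [e]
      calc ‖(inner ℂ x (adjoint T x) : ℂ)‖ ≤ ‖x‖ * ‖adjoint T x‖ := norm_inner_le_norm _ _
        _ = ‖adjoint T x‖ := by rw [hx, one_mul]
    have h3 : ‖T x‖ ^ 2 + ‖adjoint T x‖ ^ 2 ≤ ‖adjoint T * T + T * adjoint T‖ := by
      have e1 : (inner ℂ ((adjoint T * T + T * adjoint T) x) x : ℂ)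
          = inner ℂ (T x) (T x) + inner ℂ (adjoint T x) (adjoint T x) := by
        rw [ContinuousLinearMap.add_apply, inner_add_left,
          ContinuousLinearMap.mul_apply, ContinuousLinearMap.mul_apply]
        congr 1
        · exact adjoint_inner_left T x (T x)
        · exact inner_apply_left' T (adjoint T x) x
      have e2 : ‖T x‖ ^ 2 + ‖adjoint T x‖ ^ 2
          = RCLike.re (inner ℂ ((adjoint T * T + T * adjoint T) x) x : ℂ) := by
        rw [e1, map_add, inner_self_eq_norm_sq, inner_self_eq_norm_sq]
      rw [e2]
      calc RCLike.re (inner ℂ ((adjoint T * T + T * adjoint T) x) x : ℂ)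
          ≤ ‖(inner ℂ ((adjoint T * T + T * adjoint T) x) x : ℂ)‖ := RCLike.re_le_norm _
        _ ≤ ‖(adjoint T * T + T * adjoint T) x‖ * ‖x‖ := norm_inner_le_norm _ _
        _ ≤ (‖adjoint T * T + T * adjoint T‖ * ‖x‖) * ‖x‖ := by
            gcongr; exact le_opNorm _ _
        _ = ‖adjoint T * T + T * adjoint T‖ := by rw [hx]; ring
    have hp0 : (0:ℝ) ≤ ‖(inner ℂ (T x) x : ℂ)‖ := norm_nonneg _
    nlinarith [sq_nonneg (‖T x‖ - ‖adjoint T x‖)]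
  have hsup : nrad T ≤ Real.sqrt c := by
    apply Real.iSup_le _ (Real.sqrt_nonneg c)
    intro x
    exact (Real.le_sqrt (norm_nonneg _) hc0).2 (key x.1 x.2)
  have h0 : 0 ≤ nrad T := Real.iSup_nonneg fun _ => norm_nonneg _
  calc nrad T ^ 2 ≤ Real.sqrt c ^ 2 := by gcongr
    _ = c := Real.sq_sqrt hc0

variable {F : Type*} [NormedAddCommGroup F] [InnerProductSpace ℂ F] [CompleteSpace F]

lemma adjoint_norm_eq' (C : F →L[ℂ] F) : ‖adjoint C‖ = ‖C‖ := by
  rw [← star_eq_adjoint]; exact norm_star C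

lemma adj_mul_self_apply_le (C : F →L[ℂ] F) (x : F) :
    ‖(adjoint C * C) x‖ ≤ ‖C‖ ^ 2 * ‖x‖ := by
  calc ‖(adjoint C * C) x‖ = ‖adjoint C (C x)‖ := rfl
    _ ≤ ‖adjoint C‖ * ‖C x‖ := le_opNorm _ _
    _ ≤ ‖adjoint C‖ * (‖C‖ * ‖x‖) := by gcongr; exact le_opNorm _ _
    _ = ‖C‖ ^ 2 * ‖x‖ := by rw [adjoint_norm_eq']; ring

lemma pow_adj_mul_self_apply_le (C : F →L[ℂ] F) (m : ℕ) (x : F) :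
    ‖((adjoint C * C) ^ m) x‖ ≤ (‖C‖ ^ 2) ^ m * ‖x‖ := by
  induction m generalizing x with
  | zero => simp
  | succ m ih =>
    rw [pow_succ, ContinuousLinearMap.mul_apply]
    calc ‖((adjoint C * C) ^ m) ((adjoint C * C) x)‖
        ≤ (‖C‖ ^ 2) ^ m * ‖(adjoint C * C) x‖ := ih _
      _ ≤ (‖C‖ ^ 2) ^ m * (‖C‖ ^ 2 * ‖x‖) := by
          gcongr; exact adj_mul_self_apply_le C x
      _ = (‖C‖ ^ 2) ^ (m + 1) * ‖x‖ := by ring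

lemma isSelfAdjoint_adj_mul_self (C : F →L[ℂ] F) : IsSelfAdjoint (adjoint C * C) := by
  simp [IsSelfAdjoint, star_mul, star_eq_adjoint, adjoint_adjoint]

lemma sa_sq_le (R : F →L[ℂ] F) (hR : IsSelfAdjoint R) (u : F) :
    ‖R u‖ ^ 2 ≤ ‖(R ^ 2) u‖ * ‖u‖ := by
  have h1 : (inner ℂ (R u) (R u) : ℂ) = inner ℂ ((R ^ 2) u) u := by
    rw [sq, ContinuousLinearMap.mul_apply]
    have := adjoint_inner_left R u (R u)
    rw [hR.adjoint_eq] at this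
    exact this.symm
  have h2 : ‖R u‖ ^ 2 = RCLike.re (inner ℂ ((R ^ 2) u) u : ℂ) := by
    rw [← h1, inner_self_eq_norm_sq]
  rw [h2]
  calc RCLike.re (inner ℂ ((R ^ 2) u) u : ℂ) ≤ ‖(inner ℂ ((R ^ 2) u) u : ℂ)‖ :=
        RCLike.re_le_norm _
    _ ≤ ‖(R ^ 2) u‖ * ‖u‖ := norm_inner_le_norm _ _

lemma sa_pow_le (R : F →L[ℂ] F) (hR : IsSelfAdjoint R) (u : F) (n : ℕ) :
    ‖R u‖ ^ (2 ^ n) ≤ ‖(R ^ (2 ^ n)) u‖ * ‖u‖ ^ (2 ^ n - 1) := by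
  induction n with
  | zero => simp
  | succ n ih =>
    have hN : 1 ≤ 2 ^ n := Nat.one_le_two_pow
    have hsq : ‖(R ^ (2 ^ n)) u‖ ^ 2 ≤ ‖(R ^ (2 ^ (n + 1))) u‖ * ‖u‖ := by
      have h := sa_sq_le (R ^ (2 ^ n)) (hR.pow _) u
      rwa [← pow_mul, ← pow_succ] at h
    have e1 : (2:ℕ) ^ (n + 1) = 2 ^ n * 2 := by rw [pow_succ]
    calc ‖R u‖ ^ (2 ^ (n + 1)) = (‖R u‖ ^ (2 ^ n)) ^ 2 := by rw [e1, pow_mul]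
      _ ≤ (‖(R ^ (2 ^ n)) u‖ * ‖u‖ ^ (2 ^ n - 1)) ^ 2 := by
          have h0 : (0:ℝ) ≤ ‖R u‖ ^ (2 ^ n) := by positivity
          exact pow_le_pow_left₀ h0 ih 2
      _ = ‖(R ^ (2 ^ n)) u‖ ^ 2 * (‖u‖ ^ (2 ^ n - 1)) ^ 2 := by ring
      _ ≤ (‖(R ^ (2 ^ (n + 1))) u‖ * ‖u‖) * (‖u‖ ^ (2 ^ n - 1)) ^ 2 := by
          gcongr
      _ = ‖(R ^ (2 ^ (n + 1))) u‖ * ‖u‖ ^ (2 ^ (n + 1) - 1) := by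
          rw [← pow_mul, mul_assoc, ← pow_succ']
          congr 2
          omega



theorem tensor_opNorm_le
    {H K E : Type*} [NormedAddCommGroup H] [InnerProductSpace ℂ H] [CompleteSpace H]
    [NormedAddCommGroup K] [InnerProductSpace ℂ K] [CompleteSpace K]
    [NormedAddCommGroup E] [InnerProductSpace ℂ E] [CompleteSpace E]
    (tmul : H →ₗ[ℂ] K →ₗ[ℂ] E) (htmul : IsHilbertTensorMap tmul)
    (A : H →L[ℂ] H) (B : K →L[ℂ] K) (T : E →L[ℂ] E)
    (hT : IsTensorOp tmul A B T) : ‖T‖ ≤ ‖A‖ * ‖B‖ := by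
  -- norm of elementary tensors
  have hnt : ∀ (x : H) (y : K), ‖tmul x y‖ = ‖x‖ * ‖y‖ := by
    intro x y
    have h := htmul.inner_tmul x x y y
    have h2 : ‖tmul x y‖ ^ 2 = (‖x‖ * ‖y‖) ^ 2 := by
      have h5 := congrArg RCLike.re h
      rw [inner_self_eq_norm_sq, RCLike.mul_re, inner_self_im, inner_self_im,
        inner_self_eq_norm_sq, inner_self_eq_norm_sq] at h5
      rw [h5]
      ring
    have h3 := norm_nonneg (tmul x y)
    have h4 : (0:ℝ) ≤ ‖x‖ * ‖y‖ := by positivity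
    nlinarith [h2, h3, h4]
  -- orthogonality to all elementary tensors implies zero
  have horth : ∀ v : E, (∀ (z : H) (w : K), (inner ℂ (tmul z w) v : ℂ) = 0) → v = 0 := by
    intro v hv
    have hspan : ∀ u ∈ Submodule.span ℂ (Set.range fun p : H × K => tmul p.1 p.2),
        (inner ℂ u v : ℂ) = 0 := by
      intro u hu
      induction hu using Submodule.span_induction with
      | mem u hu => obtain ⟨p, rfl⟩ := hu; exact hv p.1 p.2
      | zero => simp
      | add a b _ _ ha hb => rw [inner_add_left, ha, hb, add_zero]
      | smul c a _ ha => rw [inner_smul_left, ha, mul_zero]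
    have hcont : Continuous fun u : E => (inner ℂ u v : ℂ) :=
      continuous_id.inner continuous_const
    have heq : (fun u : E => (inner ℂ u v : ℂ)) = fun _ => 0 :=
      Continuous.ext_on htmul.dense_span hcont continuous_const fun u hu => hspan u hu
    have hvv : (inner ℂ v v : ℂ) = 0 := congrFun heq v
    exact inner_self_eq_zero.mp hvv
  -- adjoint is the tensor op of the adjoints
  have hTadj : IsTensorOp tmul (adjoint A) (adjoint B) (adjoint T) := by
    intro x y
    have key : ∀ (z : H) (w : K),
        (inner ℂ (tmul z w) ((adjoint T) (tmul x y) - tmul ((adjoint A) x) ((adjoint B) y)) : ℂ)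
          = 0 := by
      intro z w
      rw [inner_sub_right]
      have h1 : (inner ℂ (tmul z w) ((adjoint T) (tmul x y)) : ℂ)
          = inner ℂ (T (tmul z w)) (tmul x y) := adjoint_inner_right T _ _
      rw [h1, hT z w, htmul.inner_tmul, htmul.inner_tmul,
        ← adjoint_inner_right A, ← adjoint_inner_right B, sub_self]
    exact sub_eq_zero.mp (horth _ key)
  -- T†T is tensor op of A†A and B†B, likewise powers
  obtain ⟨S, hSdef⟩ : ∃ S : E →L[ℂ] E, S = adjoint T * T := ⟨_, rfl⟩
  have hSapp : ∀ v : E, S v = adjoint T (T v) := fun v => by rw [hSdef]; rfl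
  have hcomp : ∀ (x : H) (y : K),
      S (tmul x y) = tmul ((adjoint A * A) x) ((adjoint B * B) y) := by
    intro x y
    rw [hSapp, hT, hTadj]
    rfl
  have hpow : ∀ (m : ℕ) (x : H) (y : K),
      (S ^ m) (tmul x y) = tmul (((adjoint A * A) ^ m) x) (((adjoint B * B) ^ m) y) := by
    intro m
    induction m with
    | zero => intro x y; simp
    | succ m ih =>
      intro x y
      calc (S ^ (m + 1)) (tmul x y) = (S ^ m) (S (tmul x y)) := by rw [pow_succ]; rfl
        _ = tmul (((adjoint A * A) ^ m) ((adjoint A * A) x))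
              (((adjoint B * B) ^ m) ((adjoint B * B) y)) := by rw [hcomp, ih]
        _ = tmul (((adjoint A * A) ^ (m + 1)) x) (((adjoint B * B) ^ (m + 1)) y) := by
              rw [pow_succ, pow_succ]; rfl
  obtain ⟨K0, hK0def⟩ : ∃ K0 : ℝ, K0 = ‖A‖ ^ 2 * ‖B‖ ^ 2 := ⟨_, rfl⟩
  have hK0 : 0 ≤ K0 := by rw [hK0def]; positivity
  -- uniform geometric bound for S^m on span elements
  have hbound : ∀ u ∈ Submodule.span ℂ (Set.range fun p : H × K => tmul p.1 p.2),
      ∃ C : ℝ, 0 ≤ C ∧ ∀ m : ℕ, ‖(S ^ m) u‖ ≤ C * K0 ^ m := by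
    intro u hu
    induction hu using Submodule.span_induction with
    | mem u hu =>
      obtain ⟨⟨x, y⟩, rfl⟩ := hu
      refine ⟨‖x‖ * ‖y‖, by positivity, fun m => ?_⟩
      rw [hpow, hnt]
      calc ‖((adjoint A * A) ^ m) x‖ * ‖((adjoint B * B) ^ m) y‖
          ≤ ((‖A‖ ^ 2) ^ m * ‖x‖) * ((‖B‖ ^ 2) ^ m * ‖y‖) := by
            gcongr <;> [exact pow_adj_mul_self_apply_le A m x;
              exact pow_adj_mul_self_apply_le B m y]
        _ = (‖x‖ * ‖y‖) * K0 ^ m := by rw [hK0def]; rw [mul_pow]; ring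
    | zero => exact ⟨0, le_refl 0, fun m => by simp⟩
    | add a b _ _ iha ihb =>
      obtain ⟨C1, hC1, hb1⟩ := iha
      obtain ⟨C2, hC2, hb2⟩ := ihb
      refine ⟨C1 + C2, by positivity, fun m => ?_⟩
      rw [map_add]
      calc ‖(S ^ m) a + (S ^ m) b‖ ≤ ‖(S ^ m) a‖ + ‖(S ^ m) b‖ := norm_add_le _ _
        _ ≤ C1 * K0 ^ m + C2 * K0 ^ m := add_le_add (hb1 m) (hb2 m)
        _ = (C1 + C2) * K0 ^ m := by ring
    | smul c a _ iha =>
      obtain ⟨C1, hC1, hb1⟩ := iha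
      refine ⟨‖c‖ * C1, by positivity, fun m => ?_⟩
      rw [map_smul, norm_smul, mul_assoc]
      gcongr
      exact hb1 m
  -- ‖S u‖ ≤ K0 ‖u‖ on the span, by the spectral-radius trick
  have hS : IsSelfAdjoint S := by rw [hSdef]; exact isSelfAdjoint_adj_mul_self T
  have hspanbound : ∀ u ∈ Submodule.span ℂ (Set.range fun p : H × K => tmul p.1 p.2),
      ‖S u‖ ≤ K0 * ‖u‖ := by
    intro u hu
    obtain ⟨C, hC0, hCb⟩ := hbound u hu
    by_contra hlt
    push_neg at hlt
    have hu0 : 0 < ‖u‖ := by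
      rcases (norm_nonneg u).lt_or_eq with h | h
      · exact h
      · have hz : u = 0 := norm_eq_zero.mp h.symm
        rw [hz] at hlt
        simp at hlt
    have hK0pos : 0 < K0 := by
      rcases hK0.lt_or_eq with h | h
      · exact h
      · exfalso
        have h1 := hCb 1
        rw [pow_one, pow_one, ← h, mul_zero] at h1
        rw [← h, zero_mul] at hlt
        linarith
    set r : ℝ := ‖S u‖ / (K0 * ‖u‖) with hrdef
    have hden : 0 < K0 * ‖u‖ := by positivity
    have hr1 : 1 < r := (one_lt_div hden).2 hlt
    have hSu : ‖S u‖ = r * (K0 * ‖u‖) := (div_mul_cancel₀ _ hden.ne').symm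
    have hkey : ∀ n : ℕ, r ^ (2 ^ n) * ‖u‖ ≤ C := by
      intro n
      set N : ℕ := 2 ^ n with hNdef
      have hN1 : 1 ≤ N := Nat.one_le_two_pow
      have h1 : ‖S u‖ ^ N ≤ ‖(S ^ N) u‖ * ‖u‖ ^ (N - 1) := sa_pow_le S hS u n
      have h2 : ‖(S ^ N) u‖ ≤ C * K0 ^ N := hCb N
      have epow : ‖u‖ ^ N = ‖u‖ ^ (N - 1) * ‖u‖ := by
        rw [← pow_succ]
        congr 1
        omega
      have hc1 : 0 < K0 ^ N * ‖u‖ ^ (N - 1) := by positivity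
      have h3 : (r ^ N * ‖u‖) * (K0 ^ N * ‖u‖ ^ (N - 1)) ≤ C * (K0 ^ N * ‖u‖ ^ (N - 1)) := by
        calc (r ^ N * ‖u‖) * (K0 ^ N * ‖u‖ ^ (N - 1)) = ‖S u‖ ^ N := by
              rw [hSu, mul_pow, mul_pow, epow]; ring
          _ ≤ ‖(S ^ N) u‖ * ‖u‖ ^ (N - 1) := h1
          _ ≤ (C * K0 ^ N) * ‖u‖ ^ (N - 1) := by
              gcongr
          _ = C * (K0 ^ N * ‖u‖ ^ (N - 1)) := by ring
      exact le_of_mul_le_mul_right h3 hc1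
    obtain ⟨n, hn⟩ := pow_unbounded_of_one_lt (C / ‖u‖) hr1
    have hmono : r ^ n ≤ r ^ (2 ^ n) :=
      pow_le_pow_right₀ hr1.le (Nat.lt_two_pow_self (n := n)).le
    have hC' : C < r ^ n * ‖u‖ := by
      rw [div_lt_iff₀ hu0] at hn
      linarith
    have := hkey n
    nlinarith [mul_le_mul_of_nonneg_right hmono hu0.le]
  -- extend to all of E by density
  have hall : ∀ u : E, ‖S u‖ ≤ K0 * ‖u‖ := by
    have hclosed : IsClosed {u : E | ‖S u‖ ≤ K0 * ‖u‖} :=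
      isClosed_le (S.continuous.norm) (continuous_const.mul continuous_norm)
    have hsub : ((Submodule.span ℂ (Set.range fun p : H × K => tmul p.1 p.2) : Submodule ℂ E)
        : Set E) ⊆ {u : E | ‖S u‖ ≤ K0 * ‖u‖} := fun v hv => hspanbound v hv
    intro u
    have h2 := hclosed.closure_subset_iff.mpr hsub
    have h3 := htmul.dense_span.closure_eq
    have : u ∈ closure ((Submodule.span ℂ
        (Set.range fun p : H × K => tmul p.1 p.2) : Submodule ℂ E) : Set E) := by
      rw [h3]; trivial
    exact h2 this
  -- conclude ‖T u‖ ≤ ‖A‖‖B‖‖u‖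
  refine opNorm_le_bound T (by positivity) fun u => ?_
  have h1 : ‖T u‖ ^ 2 = RCLike.re (inner ℂ (S u) u : ℂ) := by
    rw [hSapp, adjoint_inner_left T u (T u), inner_self_eq_norm_sq]
  have h2 : ‖T u‖ ^ 2 ≤ K0 * ‖u‖ ^ 2 := by
    rw [h1]
    calc RCLike.re (inner ℂ (S u) u : ℂ) ≤ ‖(inner ℂ (S u) u : ℂ)‖ := RCLike.re_le_norm _
      _ ≤ ‖S u‖ * ‖u‖ := norm_inner_le_norm _ _
      _ ≤ (K0 * ‖u‖) * ‖u‖ := by gcongr; exact hall u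
      _ = K0 * ‖u‖ ^ 2 := by ring
  have h3 : ‖T u‖ ^ 2 ≤ (‖A‖ * ‖B‖ * ‖u‖) ^ 2 := by
    calc ‖T u‖ ^ 2 ≤ K0 * ‖u‖ ^ 2 := h2
      _ = (‖A‖ * ‖B‖ * ‖u‖) ^ 2 := by rw [hK0def]; ring
  have h4 : (0:ℝ) ≤ ‖A‖ * ‖B‖ * ‖u‖ := by positivity
  nlinarith [norm_nonneg (T u), h3, h4]

end Helpers

theorem stmt5
    {H K E : Type*} [NormedAddCommGroup H] [InnerProductSpace ℂ H] [CompleteSpace H]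
    [NormedAddCommGroup K] [InnerProductSpace ℂ K] [CompleteSpace K]
    [NormedAddCommGroup E] [InnerProductSpace ℂ E] [CompleteSpace E]
    (tmul : H →ₗ[ℂ] K →ₗ[ℂ] E) (htmul : IsHilbertTensorMap tmul)
    (A : H →L[ℂ] H) (B : K →L[ℂ] K) (T : E →L[ℂ] E)
    (hT : IsTensorOp tmul A B T) :
    nrad T ^ 2 ≤ (1 / 2) *
      ‖ContinuousLinearMap.adjoint T * T + T * ContinuousLinearMap.adjoint T‖ ∧
    (1 / 2) * ‖ContinuousLinearMap.adjoint T * T + T * ContinuousLinearMap.adjoint T‖ ≤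
      ‖A‖ ^ 2 * ‖B‖ ^ 2 := by
  constructor
  · exact nrad_sq_le_half T
  · have hTnorm : ‖T‖ ≤ ‖A‖ * ‖B‖ := tensor_opNorm_le tmul htmul A B T hT
    have hadj : ‖ContinuousLinearMap.adjoint T‖ = ‖T‖ := adjoint_norm_eq' T
    have hna := norm_add_le (ContinuousLinearMap.adjoint T * T) (T * ContinuousLinearMap.adjoint T)
    have hm1 := norm_mul_le (ContinuousLinearMap.adjoint T) T
    have hm2 := norm_mul_le T (ContinuousLinearMap.adjoint T)
    have hsq : ‖T‖ ^ 2 ≤ (‖A‖ * ‖B‖) ^ 2 := pow_le_pow_left₀ (norm_nonneg T) hTnorm 2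
    rw [hadj] at hm1 hm2
    have e1 : ‖T‖ * ‖T‖ = ‖T‖ ^ 2 := (sq ‖T‖).symm
    have e2 : (‖A‖ * ‖B‖) ^ 2 = ‖A‖ ^ 2 * ‖B‖ ^ 2 := by ring
    linarith
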